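/- The class 𝒳 is a compact subset of C[0,1] with respect to the topology of uniform convergence. -/

import Mathlib

noncomputable def e00 (t : ℝ) : ℝ := max (min t (1 - t)) 0

noncomputable def e (m : ℕ) (k : ℤ) (t : ℝ) : ℝ :=
  (2 : ℝ) ^ (-(m : ℝ) / 2) * e00 ((2 : ℝ) ^ m * t - k)

/-- The class 𝒳 viewed inside the space `C([0,1], ℝ)` with the uniform topology. -/
def mathcalXC : Set C(Set.Icc (0 : ℝ) 1, ℝ) :=
  {f | ∃ θ : ℕ → ℕ → ℝ, (∀ m k, θ m k = 1 ∨ θ m k = -1) ∧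
    ∀ t : Set.Icc (0 : ℝ) 1,
      f t = ∑' m : ℕ, ∑ k ∈ Finset.range (2 ^ m), θ m k * e m k ↑t}

open scoped Classical

lemma e00_nonneg (x : ℝ) : 0 ≤ e00 x := le_max_right _ _

lemma e00_le_half (x : ℝ) : e00 x ≤ 1/2 := by
  unfold e00
  rcases le_total x (1/2) with h | h
  · exact max_le ((min_le_left _ _).trans h) (by norm_num)
  · exact max_le ((min_le_right _ _).trans (by linarith)) (by norm_num)

lemma e00_eq_zero {x : ℝ} (h : x ≤ 0 ∨ 1 ≤ x) : e00 x = 0 := by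
  unfold e00
  rcases h with h | h
  · exact max_eq_right ((min_le_left _ _).trans h)
  · exact max_eq_right ((min_le_right _ _).trans (by linarith))

lemma sum_e00_le (x : ℝ) (s : Finset ℕ) : ∑ k ∈ s, e00 (x - k) ≤ 1/2 := by
  classical
  set n := (⌊x⌋).toNat with hn
  have hsub : s.filter (fun k : ℕ => e00 (x - (k : ℝ)) ≠ 0) ⊆ ({n} : Finset ℕ) := by
    intro k hk
    simp only [Finset.mem_filter] at hk
    have h1 : ¬ (x - k ≤ 0 ∨ 1 ≤ x - k) := fun h => hk.2 (e00_eq_zero h)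
    push_neg at h1
    have hkx : (k : ℝ) < x := by linarith [h1.1]
    have hxk : x < k + 1 := by linarith [h1.2]
    have hfloor : ⌊x⌋ = (k : ℤ) := by
      rw [Int.floor_eq_iff]
      constructor <;> push_cast <;> linarith
    simp [Finset.mem_singleton, hn, hfloor]
  calc ∑ k ∈ s, e00 (x - k)
      = ∑ k ∈ s.filter (fun k : ℕ => e00 (x - (k : ℝ)) ≠ 0), e00 (x - k) :=
        (Finset.sum_filter_ne_zero s).symm
    _ ≤ ∑ k ∈ ({n} : Finset ℕ), e00 (x - k) :=
        Finset.sum_le_sum_of_subset_of_nonneg hsub (fun k _ _ => e00_nonneg _)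
    _ = e00 (x - n) := Finset.sum_singleton _ _
    _ ≤ 1/2 := e00_le_half _

/-- The Faber–Schauder function as a continuous map on `[0,1]`. -/
noncomputable def eC (m : ℕ) (k : ℤ) : C(Set.Icc (0 : ℝ) 1, ℝ) :=
  ⟨fun t => e m k ↑t, by
    have h00 : Continuous e00 := by
      unfold e00
      exact (continuous_id.min (continuous_const.sub continuous_id)).max continuous_const
    unfold e
    exact continuous_const.mul
      (h00.comp ((continuous_const.mul continuous_subtype_val).sub continuous_const))⟩

/-- Level-`m` block of the series, as a continuous map, depending on a sign choice `θ`. -/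
noncomputable def Fm (m : ℕ) (θ : ℕ → ℕ → Bool) : C(Set.Icc (0 : ℝ) 1, ℝ) :=
  ∑ k ∈ Finset.range (2 ^ m), (if θ m k then (1 : ℝ) else -1) • eC m k

lemma Fm_apply (m : ℕ) (θ : ℕ → ℕ → Bool) (t : Set.Icc (0 : ℝ) 1) :
    Fm m θ t = ∑ k ∈ Finset.range (2 ^ m), (if θ m k then (1 : ℝ) else -1) * e m k ↑t := by
  simp only [Fm, ContinuousMap.sum_apply]
  refine Finset.sum_congr rfl fun k _ => ?_
  split <;> simp [eC]

noncomputable def u (m : ℕ) : ℝ := ((2 : ℝ) ^ (-(2 : ℝ)⁻¹)) ^ m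

lemma u_eq (m : ℕ) : u m = (2 : ℝ) ^ (-(m : ℝ) / 2) := by
  rw [u, ← Real.rpow_natCast ((2 : ℝ) ^ (-(2 : ℝ)⁻¹)) m, ← Real.rpow_mul (by norm_num)]
  congr 1
  ring

lemma summable_u : Summable u := by
  apply summable_geometric_of_lt_one (Real.rpow_nonneg (by norm_num) _)
  exact Real.rpow_lt_one_of_one_lt_of_neg (by norm_num) (by norm_num)

lemma norm_Fm_le (m : ℕ) (θ : ℕ → ℕ → Bool) : ‖Fm m θ‖ ≤ u m := by
  have hu0 : (0 : ℝ) ≤ u m := by rw [u_eq]; positivity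
  rw [ContinuousMap.norm_le _ hu0]
  intro t
  rw [Fm_apply, Real.norm_eq_abs]
  have hpow : (0 : ℝ) ≤ (2 : ℝ) ^ (-(m : ℝ) / 2) := Real.rpow_nonneg (by norm_num) _
  calc |∑ k ∈ Finset.range (2 ^ m), (if θ m k then (1 : ℝ) else -1) * e m k ↑t|
      ≤ ∑ k ∈ Finset.range (2 ^ m), |(if θ m k then (1 : ℝ) else -1) * e m k ↑t| :=
        Finset.abs_sum_le_sum_abs _ _
    _ = ∑ k ∈ Finset.range (2 ^ m),
          (2 : ℝ) ^ (-(m : ℝ) / 2) * e00 ((2 : ℝ) ^ m * ↑t - k) := by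
        apply Finset.sum_congr rfl
        intro k _
        have h1 : |if θ m k then (1 : ℝ) else -1| = 1 := by split <;> norm_num
        rw [abs_mul, h1, one_mul, e, abs_mul, abs_of_nonneg hpow,
          abs_of_nonneg (e00_nonneg _)]
        norm_num
    _ = (2 : ℝ) ^ (-(m : ℝ) / 2) *
          ∑ k ∈ Finset.range (2 ^ m), e00 ((2 : ℝ) ^ m * ↑t - k) := by
        rw [Finset.mul_sum]
    _ ≤ (2 : ℝ) ^ (-(m : ℝ) / 2) * (1 / 2) :=
        mul_le_mul_of_nonneg_left (sum_e00_le _ _) hpow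
    _ ≤ u m := by rw [u_eq]; nlinarith

lemma summable_Fm (θ : ℕ → ℕ → Bool) : Summable (fun m => Fm m θ) :=
  Summable.of_norm_bounded (g := u) summable_u (fun m => norm_Fm_le m θ)

noncomputable def F (θ : ℕ → ℕ → Bool) : C(Set.Icc (0 : ℝ) 1, ℝ) := ∑' m, Fm m θ

lemma F_apply (θ : ℕ → ℕ → Bool) (t : Set.Icc (0 : ℝ) 1) :
    F θ t = ∑' m, Fm m θ t := by
  have := (ContinuousMap.evalCLM ℝ t).map_tsum (summable_Fm θ)
  simpa [F, ContinuousMap.evalCLM] using this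

lemma continuous_F : Continuous F := by
  show Continuous fun θ : ℕ → ℕ → Bool => ∑' m, Fm m θ
  refine continuous_tsum (f := fun m θ => Fm m θ) (u := u) (fun m => ?_) summable_u
    (fun m θ => norm_Fm_le m θ)
  unfold Fm
  apply continuous_finset_sum
  intro k _
  exact (continuous_of_discreteTopology
    (f := fun b : Bool => (if b then (1 : ℝ) else -1) • eC m k)).comp
    ((continuous_apply k).comp (continuous_apply m))

lemma range_F : Set.range F = mathcalXC := by
  ext f
  constructor
  · rintro ⟨θ, rfl⟩
    refine ⟨fun m k => if θ m k then 1 else -1, fun m k => by by_cases h : θ m k <;> simp [h], fun t => ?_⟩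
    rw [F_apply]
    exact tsum_congr fun m => by rw [Fm_apply]
  · rintro ⟨θ, hθ, hf⟩
    refine ⟨fun m k => decide (θ m k = 1), ?_⟩
    ext t
    rw [F_apply, hf t]
    refine (tsum_congr fun m => ?_).symm
    rw [Fm_apply]
    apply Finset.sum_congr rfl
    intro k _
    rcases hθ m k with h | h
    · simp [h]
    · have h1 : θ m k ≠ 1 := by rw [h]; norm_num
      norm_num [h, h1]

theorem stmt_14 : IsCompact mathcalXC := by
  rw [← range_F, ← Set.image_univ]
  exact isCompact_univ.image continuous_F
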